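/- In the SBBA mechanism, a buyer's winning probability is monotone in his bid: fixing all other bids and asks, if a buyer wins (trades with probability 1) with bid b, then he also wins with any bid b' > b. -/

import Mathlib

open scoped Classical

/-! Formalization of the SBBA mechanism on raw bid profiles.
Sellers' asks `A` are sorted ascending and buyers' bids `B` descending using
`Tuple.sort` (which also provides a fixed tie-breaking order).  Ranks are 0-based:
the number of efficient deals `numDeals` is the largest `K` with
`sortedAsks (K-1) ≤ sortedBids (K-1)`; "`s (k+1)`" is `sortedAsks K` and
"`b k`" is `sortedBids (K-1)`. -/

/-- The `i`-th lowest ask (0-based); arbitrary value `0` beyond the range. -/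
noncomputable def sortedAsks {n : ℕ} (A : Fin n → ℝ) : ℕ → ℝ := fun i =>
  if h : i < n then A (Tuple.sort A ⟨i, h⟩) else 0

/-- The `i`-th highest bid (0-based); arbitrary value `0` beyond the range. -/
noncomputable def sortedBids {n : ℕ} (B : Fin n → ℝ) : ℕ → ℝ := fun i =>
  if h : i < n then B (Tuple.sort (fun j => -B j) ⟨i, h⟩) else 0

/-- `K`, the number of efficient deals: the number of positions where the sorted
ask is at most the sorted bid. -/
noncomputable def numDeals {n : ℕ} (A B : Fin n → ℝ) : ℕ :=
  ((Finset.range n).filter fun i => sortedAsks A i ≤ sortedBids B i).card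

/-- 0-based rank of seller `j` in the ascending order of asks. -/
noncomputable def sellerRank {n : ℕ} (A : Fin n → ℝ) (j : Fin n) : ℕ :=
  ((Tuple.sort A).symm j : ℕ)

/-- 0-based rank of buyer `j` in the descending order of bids. -/
noncomputable def buyerRank {n : ℕ} (B : Fin n → ℝ) (j : Fin n) : ℕ :=
  ((Tuple.sort (fun i => -B i)).symm j : ℕ)

/-- Case 1 of SBBA: `s (k+1) ≤ b k` (in particular `k ≥ 1` and `k < n`). -/
def caseOne {n : ℕ} (A B : Fin n → ℝ) : Prop :=
  1 ≤ numDeals A B ∧ numDeals A B < n ∧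
    sortedAsks A (numDeals A B) ≤ sortedBids B (numDeals A B - 1)

/-- The single SBBA trading price `min (s (k+1)) (b k)`:
`s (k+1)` in case 1, `b k` in case 2. -/
noncomputable def price {n : ℕ} (A B : Fin n → ℝ) : ℝ :=
  if caseOne A B then sortedAsks A (numDeals A B) else sortedBids B (numDeals A B - 1)

/-- Buyer `j` wins (trades with probability 1): in case 1 the first `K` buyers win,
in case 2 the first `K - 1` buyers win. -/
noncomputable def buyerWins {n : ℕ} (A B : Fin n → ℝ) (j : Fin n) : Prop :=
  if caseOne A B then buyerRank B j < numDeals A B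
  else buyerRank B j + 1 < numDeals A B

/-- Seller `j`'s probability of trading: `1` for the first `K` sellers in case 1,
`1 - 1/K` for them in case 2 (one of them, uniformly random, is excluded),
and `0` for all other sellers. -/
noncomputable def sellerProb {n : ℕ} (A B : Fin n → ℝ) (j : Fin n) : ℝ :=
  if sellerRank A j < numDeals A B then
    (if caseOne A B then 1 else 1 - 1 / (numDeals A B : ℝ))
  else 0

open scoped Classical

section Aux

/-- The sorting permutation is strictly monotone w.r.t. the lexicographic key `(f i, i)`. -/
private lemma sort_key_lt {n : ℕ} (f : Fin n → ℝ) (k l : Fin n) :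
    k < l ↔ (f (Tuple.sort f k) < f (Tuple.sort f l) ∨
      (f (Tuple.sort f k) = f (Tuple.sort f l) ∧ Tuple.sort f k < Tuple.sort f l)) := by
  have hs : StrictMono ((Tuple.sort f).trans (Tuple.graphEquiv₁ f)) := Tuple.eq_sort_iff'.mp rfl
  rw [← hs.lt_iff_lt (a := k) (b := l)]
  show (Tuple.graphEquiv₁ f (Tuple.sort f k) < Tuple.graphEquiv₁ f (Tuple.sort f l)) ↔ _
  rw [Subtype.mk_lt_mk]
  exact Prod.Lex.lt_iff

/-- The rank of `j` in the sort order is the number of indices with smaller lex key. -/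
private lemma rank_eq_card {n : ℕ} (f : Fin n → ℝ) (j : Fin n) :
    (((Tuple.sort f).symm j : Fin n) : ℕ) =
      (Finset.univ.filter fun i => f i < f j ∨ (f i = f j ∧ i < j)).card := by
  set σ := Tuple.sort f with hσ
  set r := σ.symm j with hr
  have hj : σ r = j := σ.apply_symm_apply j
  have hset : (Finset.univ.filter fun i => f i < f j ∨ (f i = f j ∧ i < j)) =
      (Finset.Iio r).image σ := by
    ext i
    simp only [Finset.mem_filter, Finset.mem_univ, true_and, Finset.mem_image, Finset.mem_Iio]
    constructor
    · intro h
      refine ⟨σ.symm i, ?_, σ.apply_symm_apply i⟩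
      rw [sort_key_lt f (σ.symm i) r, hj, σ.apply_symm_apply i]
      exact h
    · rintro ⟨k, hk, rfl⟩
      have := (sort_key_lt f k r).mp hk
      rwa [hj] at this
  rw [hset, Finset.card_image_of_injective _ σ.injective, Fin.card_Iio]

/-- Raising buyer `j`'s bid weakly improves (decreases) his rank. -/
private lemma rank_le_of_raise {n : ℕ} (B : Fin n → ℝ) (j : Fin n) (b' : ℝ) (h : B j ≤ b') :
    (((Tuple.sort fun i => -(Function.update B j b') i).symm j : Fin n) : ℕ) ≤
      (((Tuple.sort fun i => -B i).symm j : Fin n) : ℕ) := by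
  rw [rank_eq_card, rank_eq_card]
  apply Finset.card_le_card
  intro i hi
  simp only [Finset.mem_filter, Finset.mem_univ, true_and] at hi ⊢
  rcases eq_or_ne i j with rfl | hij
  · rcases hi with h1 | ⟨_, h2⟩
    · exact absurd h1 (lt_irrefl _)
    · exact absurd h2 (lt_irrefl _)
  · have hBi : Function.update B j b' i = B i := Function.update_of_ne hij _ _
    have hBj : Function.update B j b' j = b' := Function.update_self _ _ _
    rw [hBi, hBj] at hi
    have hle : -B i ≤ -B j := by
      rcases hi with h1 | ⟨h1, _⟩
      · linarith
      · linarith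
    rcases lt_or_eq_of_le hle with h1 | h1
    · exact Or.inl h1
    · rcases hi with h2 | ⟨h2, h3⟩
      · exfalso; linarith
      · exact Or.inr ⟨h1, h3⟩

/-- Order statistics are monotone under pointwise domination. -/
private lemma sorted_le_sorted {n : ℕ} (f f' : Fin n → ℝ) (h : ∀ i, f' i ≤ f i) (i : Fin n) :
    f' (Tuple.sort f' i) ≤ f (Tuple.sort f i) := by
  set σ := Tuple.sort f with hσ
  set σ' := Tuple.sort f' with hσ'
  set S := (Finset.Iic i).image (σ : Fin n → Fin n) with hS
  set T := (Finset.Ici i).image (σ' : Fin n → Fin n) with hT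
  have hSc : S.card = (i : ℕ) + 1 := by
    rw [hS, Finset.card_image_of_injective _ σ.injective, Fin.card_Iic]
  have hTc : T.card = n - (i : ℕ) := by
    rw [hT, Finset.card_image_of_injective _ σ'.injective, Fin.card_Ici]
  have hunion : (S ∪ T).card ≤ n := by
    calc (S ∪ T).card ≤ (Finset.univ : Finset (Fin n)).card :=
        Finset.card_le_card (Finset.subset_univ _)
      _ = n := Finset.card_fin n
  have hsum : (S ∩ T).card + (S ∪ T).card = S.card + T.card :=
    Finset.card_inter_add_card_union S T
  have hin : i.val < n := i.isLt
  have hnon : (S ∩ T).Nonempty := by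
    rw [← Finset.card_pos]
    omega
  obtain ⟨m, hm⟩ := hnon
  rw [Finset.mem_inter] at hm
  obtain ⟨hmS, hmT⟩ := hm
  rw [hS, Finset.mem_image] at hmS
  rw [hT, Finset.mem_image] at hmT
  obtain ⟨k, hk, hkm⟩ := hmS
  obtain ⟨l, hl, hlm⟩ := hmT
  rw [Finset.mem_Iic] at hk
  rw [Finset.mem_Ici] at hl
  calc f' (σ' i) ≤ f' (σ' l) := Tuple.monotone_sort f' hl
    _ = f' m := by rw [hlm]
    _ ≤ f m := h m
    _ = f (σ k) := by rw [hkm]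
    _ ≤ f (σ i) := Tuple.monotone_sort f hk

private lemma sortedBids_le {n : ℕ} (B : Fin n → ℝ) (j : Fin n) (b' : ℝ) (h : B j ≤ b') (i : ℕ) :
    sortedBids B i ≤ sortedBids (Function.update B j b') i := by
  unfold sortedBids
  by_cases hi : i < n
  · rw [dif_pos hi, dif_pos hi]
    have hpt : ∀ k, -(Function.update B j b') k ≤ -B k := by
      intro k
      rcases eq_or_ne k j with rfl | hkj
      · rw [Function.update_self]; linarith
      · rw [Function.update_of_ne hkj]
    have := sorted_le_sorted (fun k => -B k) (fun k => -(Function.update B j b') k) hpt ⟨i, hi⟩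
    linarith
  · rw [dif_neg hi, dif_neg hi]

end Aux

/-- Monotonicity for buyers in SBBA: fixing all other bids and asks, if buyer `j`
wins with bid `B j`, he also wins with any higher bid `b' > B j`. -/
theorem sbba_buyer_monotone {n : ℕ} (A B : Fin n → ℝ) (j : Fin n) (b' : ℝ)
    (hwin : buyerWins A B j) (hup : B j < b') :
    buyerWins A (Function.update B j b') j := by
  classical
  set B' := Function.update B j b' with hB'
  have hle : B j ≤ b' := hup.le
  have hbids : ∀ i, sortedBids B i ≤ sortedBids B' i := sortedBids_le B j b' hle
  have hK : numDeals A B ≤ numDeals A B' := by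
    apply Finset.card_le_card
    intro i hi
    simp only [Finset.mem_filter] at hi ⊢
    exact ⟨hi.1, hi.2.trans (hbids i)⟩
  have hr : buyerRank B' j ≤ buyerRank B j := rank_le_of_raise B j b' hle
  unfold buyerWins at hwin ⊢
  by_cases h1 : caseOne A B
  · rw [if_pos h1] at hwin
    obtain ⟨hK1, hKn, hs⟩ := h1
    by_cases h2 : caseOne A B'
    · rw [if_pos h2]; omega
    · rw [if_neg h2]
      have hne : numDeals A B ≠ numDeals A B' := by
        intro he
        exact h2 ⟨he ▸ hK1, he ▸ hKn, by rw [← he]; exact hs.trans (hbids _)⟩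
      omega
  · rw [if_neg h1] at hwin
    by_cases h2 : caseOne A B'
    · rw [if_pos h2]; omega
    · rw [if_neg h2]; omega
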